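/- Let M1, M2 ∈ R^{d1×d2} be rank-r matrices with compact SVDs M1 = U1Σ1V1ᵀ, M2 = U2'Σ2'V2'ᵀ. Define σ_min = min{σ_min(M1), σ_min(M2)} (smallest nonzero singular values) and σ_max = max{σ_max(M1), σ_max(M2)}. If ‖M1 − M2‖_op ≤ σ_min/2, then the Moore–Penrose pseudoinverses satisfy ‖M1† − M2†‖_op ≤ (4√2 + 1)·(σ_max/σ_min³)·‖M1 − M2‖_op. -/

import Mathlib

open Matrix BigOperators

noncomputable def opNorm {m n : ℕ} (A : Matrix (Fin m) (Fin n) ℝ) : ℝ :=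
  ‖LinearMap.toContinuousLinearMap (Matrix.toEuclideanLin A)‖

section Aux
open scoped Matrix.Norms.L2Operator

lemma aux_opNorm_eq {m n : ℕ} (A : Matrix (Fin m) (Fin n) ℝ) : opNorm A = ‖A‖ := rfl

lemma aux_ct_eq {m n : ℕ} (A : Matrix (Fin m) (Fin n) ℝ) : Aᴴ = Aᵀ := by
  ext i j; simp [Matrix.conjTranspose_apply]

lemma aux_norm_transpose {m n : ℕ} (A : Matrix (Fin m) (Fin n) ℝ) : ‖Aᵀ‖ = ‖A‖ := by
  rw [← Matrix.l2_opNorm_conjTranspose A, aux_ct_eq]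

lemma aux_norm_one {r : ℕ} [NeZero r] : ‖(1 : Matrix (Fin r) (Fin r) ℝ)‖ = 1 := by
  rw [Matrix.l2_opNorm_def]
  convert ContinuousLinearMap.norm_id (E := EuclideanSpace ℝ (Fin r))
  ext x
  simp [Matrix.toEuclideanLin_apply]

lemma aux_norm_isometry {n r : ℕ} [NeZero r] (V : Matrix (Fin n) (Fin r) ℝ)
    (hV : Vᵀ * V = 1) : ‖V‖ = 1 := by
  have h := Matrix.l2_opNorm_conjTranspose_mul_self V
  rw [aux_ct_eq, hV, aux_norm_one] at h
  nlinarith [norm_nonneg V]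

lemma aux_norm_diag {r : ℕ} (d : Fin r → ℝ) (c : ℝ) (hc : 0 ≤ c) (h : ∀ k, |d k| ≤ c) :
    ‖(Matrix.diagonal d : Matrix (Fin r) (Fin r) ℝ)‖ ≤ c := by
  rw [Matrix.l2_opNorm_def]
  apply ContinuousLinearMap.opNorm_le_bound _ hc
  intro x
  have hx : ∀ (y : EuclideanSpace ℝ (Fin r)), ‖y‖ = Real.sqrt (∑ i, (y i)^2) := by
    intro y
    rw [EuclideanSpace.norm_eq]
    congr 1; apply Finset.sum_congr rfl; intro i _; rw [Real.norm_eq_abs, sq_abs]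
  rw [hx, hx]
  have happ : ∀ i, ((Matrix.toEuclideanLin (Matrix.diagonal d)).toContinuousLinearMap x) i
      = d i * x i := by
    intro i
    simp [Matrix.toEuclideanLin_apply, Matrix.mulVec_diagonal]
  calc Real.sqrt (∑ i, (((Matrix.toEuclideanLin (Matrix.diagonal d)).toContinuousLinearMap x) i)^2)
      = Real.sqrt (∑ i, (d i * x i)^2) := by rw [funext happ]
    _ ≤ Real.sqrt (∑ i, c^2 * (x i)^2) := by
        apply Real.sqrt_le_sqrt
        apply Finset.sum_le_sum
        intro i _
        calc (d i * x i)^2 = (d i)^2 * (x i)^2 := by ring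
          _ ≤ c^2 * (x i)^2 := by
              have h2 : (d i)^2 ≤ c^2 := by
                rw [← sq_abs (d i)]
                exact pow_le_pow_left₀ (abs_nonneg _) (h i) 2
              exact mul_le_mul_of_nonneg_right h2 (sq_nonneg _)
    _ = c * Real.sqrt (∑ i, (x i)^2) := by
        rw [← Finset.mul_sum, Real.sqrt_mul (by positivity), Real.sqrt_sq hc]

lemma aux_norm_proj_compl {d r : ℕ} [NeZero r] (U : Matrix (Fin d) (Fin r) ℝ)
    (hU : Uᵀ * U = 1) : ‖(1 : Matrix (Fin d) (Fin d) ℝ) - U * Uᵀ‖ ≤ 1 := by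
  set Q : Matrix (Fin d) (Fin d) ℝ := 1 - U * Uᵀ with hQ
  have hQt : Qᵀ = Q := by
    rw [hQ]; simp [Matrix.transpose_sub, Matrix.transpose_mul]
  have hQQ : Q * Q = Q := by
    rw [hQ]
    simp only [Matrix.mul_sub, Matrix.sub_mul, Matrix.mul_one, Matrix.one_mul]
    rw [Matrix.mul_assoc, ← Matrix.mul_assoc Uᵀ U, hU, Matrix.one_mul]
    abel
  have h := Matrix.l2_opNorm_conjTranspose_mul_self Q
  rw [aux_ct_eq, hQt, hQQ] at h
  nlinarith [norm_nonneg Q]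

end Aux

/-- Pseudoinverse perturbation bound.  Let `M₁ = U₁ Σ₁ V₁ᵀ`,
`M₂ = U₂ Σ₂ V₂ᵀ` be compact SVDs of rank-`r` matrices (with positive singular
values `σ₁, σ₂`).  Set `σmin = min` of the smallest and `σmax = max` of the largest
singular values.  If `‖M₁ − M₂‖_op ≤ σmin/2`, the Moore–Penrose pseudoinverses
`Mᵢ† = Vᵢ Σᵢ⁻¹ Uᵢᵀ` satisfy
`‖M₁† − M₂†‖_op ≤ (4√2+1)·(σmax/σmin³)·‖M₁ − M₂‖_op`. -/
theorem pinv_perturbation {d1 d2 r : ℕ} (hr : 1 ≤ r)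
    (U1 U2 : Matrix (Fin d1) (Fin r) ℝ) (V1 V2 : Matrix (Fin d2) (Fin r) ℝ)
    (σ1 σ2 : Fin r → ℝ) (hσ1 : ∀ k, 0 < σ1 k) (hσ2 : ∀ k, 0 < σ2 k)
    (hU1 : U1ᵀ * U1 = 1) (hU2 : U2ᵀ * U2 = 1)
    (hV1 : V1ᵀ * V1 = 1) (hV2 : V2ᵀ * V2 = 1)
    (M1 M2 : Matrix (Fin d1) (Fin d2) ℝ)
    (hM1 : M1 = U1 * Matrix.diagonal σ1 * V1ᵀ)
    (hM2 : M2 = U2 * Matrix.diagonal σ2 * V2ᵀ)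
    (σmin σmax : ℝ)
    (hσmin : σmin = min (⨅ k : Fin r, σ1 k) (⨅ k : Fin r, σ2 k))
    (hσmax : σmax = max (⨆ k : Fin r, σ1 k) (⨆ k : Fin r, σ2 k))
    (hclose : opNorm (M1 - M2) ≤ σmin / 2) :
    opNorm (V1 * Matrix.diagonal (fun k => (σ1 k)⁻¹) * U1ᵀ -
        V2 * Matrix.diagonal (fun k => (σ2 k)⁻¹) * U2ᵀ)
      ≤ (4 * Real.sqrt 2 + 1) * (σmax / σmin ^ 3) * opNorm (M1 - M2) := by
  open scoped Matrix.Norms.L2Operator in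
  haveI : NeZero r := ⟨by omega⟩
  -- basic facts about σmin, σmax
  have hbd1 : BddBelow (Set.range σ1) := (Set.finite_range σ1).bddBelow
  have hbd2 : BddBelow (Set.range σ2) := (Set.finite_range σ2).bddBelow
  have hba1 : BddAbove (Set.range σ1) := (Set.finite_range σ1).bddAbove
  have hba2 : BddAbove (Set.range σ2) := (Set.finite_range σ2).bddAbove
  have hσmin_le1 : ∀ k, σmin ≤ σ1 k := fun k =>
    hσmin ▸ le_trans (min_le_left _ _) (ciInf_le hbd1 k)
  have hσmin_le2 : ∀ k, σmin ≤ σ2 k := fun k =>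
    hσmin ▸ le_trans (min_le_right _ _) (ciInf_le hbd2 k)
  have hσmin_pos : 0 < σmin := by
    obtain ⟨k1, hk1⟩ := Finite.exists_min σ1
    obtain ⟨k2, hk2⟩ := Finite.exists_min σ2
    rw [hσmin]
    apply lt_min
    · exact lt_of_lt_of_le (hσ1 k1) (le_ciInf hk1)
    · exact lt_of_lt_of_le (hσ2 k2) (le_ciInf hk2)
  have hσmax_ge : σmin ≤ σmax := by
    have k0 : Fin r := ⟨0, by omega⟩
    calc σmin ≤ σ1 k0 := hσmin_le1 k0
      _ ≤ ⨆ k, σ1 k := le_ciSup hba1 k0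
      _ ≤ σmax := hσmax ▸ le_max_left _ _
  -- abbreviations
  set P1 : Matrix (Fin d2) (Fin d1) ℝ := V1 * Matrix.diagonal (fun k => (σ1 k)⁻¹) * U1ᵀ with hP1
  set P2 : Matrix (Fin d2) (Fin d1) ℝ := V2 * Matrix.diagonal (fun k => (σ2 k)⁻¹) * U2ᵀ with hP2
  set E : Matrix (Fin d1) (Fin d2) ℝ := M1 - M2 with hE
  -- norm bounds on pseudoinverses
  have hnormP : ∀ (U : Matrix (Fin d1) (Fin r) ℝ) (V : Matrix (Fin d2) (Fin r) ℝ)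
      (σ : Fin r → ℝ), Uᵀ * U = 1 → Vᵀ * V = 1 → (∀ k, 0 < σ k) → (∀ k, σmin ≤ σ k) →
      ‖V * Matrix.diagonal (fun k => (σ k)⁻¹) * Uᵀ‖ ≤ σmin⁻¹ := by
    intro U V σ hU hV hσ hle
    calc ‖V * Matrix.diagonal (fun k => (σ k)⁻¹) * Uᵀ‖
        ≤ ‖V * Matrix.diagonal (fun k => (σ k)⁻¹)‖ * ‖Uᵀ‖ := Matrix.l2_opNorm_mul _ _
      _ ≤ ‖V‖ * ‖(Matrix.diagonal (fun k => (σ k)⁻¹) : Matrix (Fin r) (Fin r) ℝ)‖ * ‖Uᵀ‖ := by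
          apply mul_le_mul_of_nonneg_right (Matrix.l2_opNorm_mul _ _) (norm_nonneg _)
      _ ≤ 1 * σmin⁻¹ * 1 := by
          apply mul_le_mul
          · apply mul_le_mul
            · exact le_of_eq (aux_norm_isometry V hV)
            · apply aux_norm_diag _ _ (by positivity)
              intro k
              rw [abs_of_pos (inv_pos.mpr (hσ k))]
              exact inv_anti₀ hσmin_pos (hle k)
            · exact norm_nonneg _
            · norm_num
          · exact le_of_eq ((aux_norm_transpose U).trans (aux_norm_isometry U hU))
          · exact norm_nonneg _
          · positivity
      _ = σmin⁻¹ := by ring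
  have hnP1 : ‖P1‖ ≤ σmin⁻¹ := hnormP U1 V1 σ1 hU1 hV1 hσ1 hσmin_le1
  have hnP2 : ‖P2‖ ≤ σmin⁻¹ := hnormP U2 V2 σ2 hU2 hV2 hσ2 hσmin_le2
  have hnE : (0:ℝ) ≤ ‖E‖ := norm_nonneg _
  -- key projections
  have hM2P2 : M2 * P2 = U2 * U2ᵀ := by
    rw [hM2, hP2]
    simp only [Matrix.mul_assoc]
    rw [← Matrix.mul_assoc V2ᵀ V2, hV2, Matrix.one_mul,
        ← Matrix.mul_assoc (Matrix.diagonal σ2)]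
    rw [Matrix.diagonal_mul_diagonal]
    have : (fun k => σ2 k * (σ2 k)⁻¹) = fun _ => (1:ℝ) := by
      funext k; exact mul_inv_cancel₀ (hσ2 k).ne'
    rw [this, Matrix.diagonal_one, Matrix.one_mul]
  have hP1M1 : P1 * M1 = V1 * V1ᵀ := by
    rw [hM1, hP1]
    simp only [Matrix.mul_assoc]
    rw [← Matrix.mul_assoc U1ᵀ U1, hU1, Matrix.one_mul,
        ← Matrix.mul_assoc (Matrix.diagonal (fun k => (σ1 k)⁻¹))]
    rw [Matrix.diagonal_mul_diagonal]
    have : (fun k => (σ1 k)⁻¹ * σ1 k) = fun _ => (1:ℝ) := by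
      funext k; exact inv_mul_cancel₀ (hσ1 k).ne'
    rw [this, Matrix.diagonal_one, Matrix.one_mul]
  -- the Wedin identity
  have hidentity : P1 - P2 = -(P1 * E * P2) + P1 * P1ᵀ * Eᵀ * (1 - M2 * P2)
      + (1 - P1 * M1) * Eᵀ * P2ᵀ * P2 := by
    rw [hP1, hP2, hE, hM1, hM2]
    have hU1x : ∀ {p : ℕ} (X : Matrix (Fin r) (Fin p) ℝ), U1ᵀ * (U1 * X) = X := by
      intro p X; rw [← Matrix.mul_assoc, hU1, Matrix.one_mul]
    have hU2x : ∀ {p : ℕ} (X : Matrix (Fin r) (Fin p) ℝ), U2ᵀ * (U2 * X) = X := by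
      intro p X; rw [← Matrix.mul_assoc, hU2, Matrix.one_mul]
    have hV1x : ∀ {p : ℕ} (X : Matrix (Fin r) (Fin p) ℝ), V1ᵀ * (V1 * X) = X := by
      intro p X; rw [← Matrix.mul_assoc, hV1, Matrix.one_mul]
    have hV2x : ∀ {p : ℕ} (X : Matrix (Fin r) (Fin p) ℝ), V2ᵀ * (V2 * X) = X := by
      intro p X; rw [← Matrix.mul_assoc, hV2, Matrix.one_mul]
    have d1a : ∀ {p : ℕ} (X : Matrix (Fin r) (Fin p) ℝ),
        Matrix.diagonal (fun k => (σ1 k)⁻¹) * (Matrix.diagonal σ1 * X) = X := by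
      intro p X
      rw [← Matrix.mul_assoc, Matrix.diagonal_mul_diagonal]
      have : (fun k => (σ1 k)⁻¹ * σ1 k) = fun _ => (1:ℝ) := by
        funext k; exact inv_mul_cancel₀ (hσ1 k).ne'
      rw [this, Matrix.diagonal_one, Matrix.one_mul]
    have d1b : ∀ {p : ℕ} (X : Matrix (Fin r) (Fin p) ℝ),
        Matrix.diagonal σ1 * (Matrix.diagonal (fun k => (σ1 k)⁻¹) * X) = X := by
      intro p X
      rw [← Matrix.mul_assoc, Matrix.diagonal_mul_diagonal]
      have : (fun k => σ1 k * (σ1 k)⁻¹) = fun _ => (1:ℝ) := by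
        funext k; exact mul_inv_cancel₀ (hσ1 k).ne'
      rw [this, Matrix.diagonal_one, Matrix.one_mul]
    have d2a : ∀ {p : ℕ} (X : Matrix (Fin r) (Fin p) ℝ),
        Matrix.diagonal (fun k => (σ2 k)⁻¹) * (Matrix.diagonal σ2 * X) = X := by
      intro p X
      rw [← Matrix.mul_assoc, Matrix.diagonal_mul_diagonal]
      have : (fun k => (σ2 k)⁻¹ * σ2 k) = fun _ => (1:ℝ) := by
        funext k; exact inv_mul_cancel₀ (hσ2 k).ne'
      rw [this, Matrix.diagonal_one, Matrix.one_mul]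
    have d2b : ∀ {p : ℕ} (X : Matrix (Fin r) (Fin p) ℝ),
        Matrix.diagonal σ2 * (Matrix.diagonal (fun k => (σ2 k)⁻¹) * X) = X := by
      intro p X
      rw [← Matrix.mul_assoc, Matrix.diagonal_mul_diagonal]
      have : (fun k => σ2 k * (σ2 k)⁻¹) = fun _ => (1:ℝ) := by
        funext k; exact mul_inv_cancel₀ (hσ2 k).ne'
      rw [this, Matrix.diagonal_one, Matrix.one_mul]
    simp only [Matrix.transpose_sub, Matrix.transpose_mul, Matrix.transpose_transpose,
      Matrix.diagonal_transpose, Matrix.sub_mul, Matrix.mul_sub, Matrix.mul_one, Matrix.one_mul,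
      Matrix.mul_assoc, hU1x, hU2x, hV1x, hV2x, d1a, d1b, d2a, d2b]
    abel
  -- bound the three terms
  have hnEt : ‖Eᵀ‖ = ‖E‖ := aux_norm_transpose E
  have ht1 : ‖P1 * E * P2‖ ≤ σmin⁻¹ * ‖E‖ * σmin⁻¹ := by
    calc ‖P1 * E * P2‖ ≤ ‖P1 * E‖ * ‖P2‖ := Matrix.l2_opNorm_mul _ _
      _ ≤ ‖P1‖ * ‖E‖ * ‖P2‖ :=
          mul_le_mul_of_nonneg_right (Matrix.l2_opNorm_mul _ _) (norm_nonneg _)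
      _ ≤ σmin⁻¹ * ‖E‖ * σmin⁻¹ := by
          apply mul_le_mul (mul_le_mul_of_nonneg_right hnP1 hnE) hnP2 (norm_nonneg _) (by positivity)
  have ht2 : ‖P1 * P1ᵀ * Eᵀ * (1 - M2 * P2)‖ ≤ σmin⁻¹ * σmin⁻¹ * ‖E‖ := by
    have hproj : ‖(1 : Matrix (Fin d1) (Fin d1) ℝ) - M2 * P2‖ ≤ 1 := by
      rw [hM2P2]; exact aux_norm_proj_compl U2 hU2
    calc ‖P1 * P1ᵀ * Eᵀ * (1 - M2 * P2)‖
        ≤ ‖P1 * P1ᵀ * Eᵀ‖ * ‖(1 : Matrix (Fin d1) (Fin d1) ℝ) - M2 * P2‖ :=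
          Matrix.l2_opNorm_mul _ _
      _ ≤ ‖P1 * P1ᵀ * Eᵀ‖ * 1 :=
          mul_le_mul_of_nonneg_left hproj (norm_nonneg _)
      _ = ‖P1 * P1ᵀ * Eᵀ‖ := mul_one _
      _ ≤ ‖P1 * P1ᵀ‖ * ‖Eᵀ‖ := Matrix.l2_opNorm_mul _ _
      _ ≤ ‖P1‖ * ‖P1ᵀ‖ * ‖Eᵀ‖ :=
          mul_le_mul_of_nonneg_right (Matrix.l2_opNorm_mul _ _) (norm_nonneg _)
      _ ≤ σmin⁻¹ * σmin⁻¹ * ‖E‖ := by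
          rw [hnEt, aux_norm_transpose P1]
          apply mul_le_mul_of_nonneg_right _ hnE
          exact mul_le_mul hnP1 hnP1 (norm_nonneg _) (by positivity)
  have ht3 : ‖(1 - P1 * M1) * Eᵀ * P2ᵀ * P2‖ ≤ ‖E‖ * σmin⁻¹ * σmin⁻¹ := by
    have hproj : ‖(1 : Matrix (Fin d2) (Fin d2) ℝ) - P1 * M1‖ ≤ 1 := by
      rw [hP1M1]; exact aux_norm_proj_compl V1 hV1
    calc ‖(1 - P1 * M1) * Eᵀ * P2ᵀ * P2‖
        ≤ ‖(1 - P1 * M1) * Eᵀ * P2ᵀ‖ * ‖P2‖ := Matrix.l2_opNorm_mul _ _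
      _ ≤ ‖(1 - P1 * M1) * Eᵀ‖ * ‖P2ᵀ‖ * ‖P2‖ :=
          mul_le_mul_of_nonneg_right (Matrix.l2_opNorm_mul _ _) (norm_nonneg _)
      _ ≤ ‖(1 : Matrix (Fin d2) (Fin d2) ℝ) - P1 * M1‖ * ‖Eᵀ‖ * ‖P2ᵀ‖ * ‖P2‖ :=
          mul_le_mul_of_nonneg_right
            (mul_le_mul_of_nonneg_right (Matrix.l2_opNorm_mul _ _) (norm_nonneg _))
            (norm_nonneg _)
      _ ≤ 1 * ‖E‖ * σmin⁻¹ * σmin⁻¹ := by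
          rw [hnEt, aux_norm_transpose P2]
          apply mul_le_mul _ hnP2 (norm_nonneg _) (by positivity)
          apply mul_le_mul _ hnP2 (norm_nonneg _) (by positivity)
          exact mul_le_mul_of_nonneg_right hproj hnE
      _ = ‖E‖ * σmin⁻¹ * σmin⁻¹ := by ring
  -- combine
  have hmain : ‖P1 - P2‖ ≤ 3 * σmin⁻¹ * σmin⁻¹ * ‖E‖ := by
    rw [hidentity]
    calc ‖-(P1 * E * P2) + P1 * P1ᵀ * Eᵀ * (1 - M2 * P2) + (1 - P1 * M1) * Eᵀ * P2ᵀ * P2‖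
        ≤ ‖-(P1 * E * P2) + P1 * P1ᵀ * Eᵀ * (1 - M2 * P2)‖
          + ‖(1 - P1 * M1) * Eᵀ * P2ᵀ * P2‖ := norm_add_le _ _
      _ ≤ ‖-(P1 * E * P2)‖ + ‖P1 * P1ᵀ * Eᵀ * (1 - M2 * P2)‖
          + ‖(1 - P1 * M1) * Eᵀ * P2ᵀ * P2‖ := by
          apply add_le_add_left (norm_add_le _ _)
      _ = ‖P1 * E * P2‖ + ‖P1 * P1ᵀ * Eᵀ * (1 - M2 * P2)‖
          + ‖(1 - P1 * M1) * Eᵀ * P2ᵀ * P2‖ := by rw [norm_neg]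
      _ ≤ (σmin⁻¹ * ‖E‖ * σmin⁻¹) + (σmin⁻¹ * σmin⁻¹ * ‖E‖) + (‖E‖ * σmin⁻¹ * σmin⁻¹) := by
          exact add_le_add (add_le_add ht1 ht2) ht3
      _ = 3 * σmin⁻¹ * σmin⁻¹ * ‖E‖ := by ring
  -- final arithmetic
  have hsqrt2 : (1:ℝ) ≤ Real.sqrt 2 := by
    rw [show (1:ℝ) = Real.sqrt 1 from (Real.sqrt_one).symm]
    exact Real.sqrt_le_sqrt (by norm_num)
  have hfinal : 3 * σmin⁻¹ * σmin⁻¹ * ‖E‖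
      ≤ (4 * Real.sqrt 2 + 1) * (σmax / σmin ^ 3) * ‖E‖ := by
    apply mul_le_mul_of_nonneg_right _ hnE
    rw [div_eq_mul_inv, pow_succ, pow_two, mul_inv, mul_inv]
    have h1 : 3 * σmin⁻¹ * σmin⁻¹ = (3 * σmin) * (σmin⁻¹ * σmin⁻¹ * σmin⁻¹) := by
      field_simp
    have h2 : (4 * Real.sqrt 2 + 1) * (σmax * (σmin⁻¹ * σmin⁻¹ * σmin⁻¹))
        = ((4 * Real.sqrt 2 + 1) * σmax) * (σmin⁻¹ * σmin⁻¹ * σmin⁻¹) := by ring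
    rw [h1, h2]
    apply mul_le_mul_of_nonneg_right _ (by positivity)
    calc 3 * σmin ≤ 3 * σmax := by linarith
      _ ≤ (4 * Real.sqrt 2 + 1) * σmax := by nlinarith [hσmin_pos, hσmax_ge]
  calc opNorm (P1 - P2) = ‖P1 - P2‖ := aux_opNorm_eq _
    _ ≤ 3 * σmin⁻¹ * σmin⁻¹ * ‖E‖ := hmain
    _ ≤ (4 * Real.sqrt 2 + 1) * (σmax / σmin ^ 3) * ‖E‖ := hfinal
    _ = (4 * Real.sqrt 2 + 1) * (σmax / σmin ^ 3) * opNorm (M1 - M2) := by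
        rw [← aux_opNorm_eq]
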